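/- For the directional mapping ξ = θ + r(v + ρθ), s = −r/(1+rρ), w = v with θ, v ∈ ℝⁿ (n ≥ 2), the absolute value of the Jacobian determinant of (θ, r, v) ↦ (ξ, s, w) equals |1 + rρ|^{n−2}. -/

import Mathlib

open ContinuousLinearMap in
lemma aux_det8 (n : ℕ) (a c rr : ℝ) (u : Fin n → ℝ)
    (L : ((Fin n → ℝ) × ℝ × (Fin n → ℝ)) →ₗ[ℝ] ((Fin n → ℝ) × ℝ × (Fin n → ℝ)))
    (hL : ∀ p : (Fin n → ℝ) × ℝ × (Fin n → ℝ),
      L p = (a • p.1 + p.2.1 • u + rr • p.2.2, c * p.2.1, p.2.2)) :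
    LinearMap.det L = a ^ n * c := by
  classical
  set bP : Module.Basis (Fin n) ℝ (Fin n → ℝ) := Pi.basisFun ℝ (Fin n) with hbP
  set bb : Module.Basis (Fin n ⊕ (Unit ⊕ Fin n)) ℝ ((Fin n → ℝ) × ℝ × (Fin n → ℝ)) :=
    bP.prod ((Module.Basis.singleton Unit ℝ).prod bP) with hbb
  rw [← LinearMap.det_toMatrix bb]
  have hM : LinearMap.toMatrix bb bb L =
      Matrix.fromBlocks (a • (1 : Matrix (Fin n) (Fin n) ℝ))
        (Matrix.of fun i j => Sum.elim (fun _ : Unit => u i)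
          (fun j' => rr * (1 : Matrix (Fin n) (Fin n) ℝ) i j') j)
        0
        (Matrix.fromBlocks (Matrix.of fun _ _ : Unit => c) 0 0
          (1 : Matrix (Fin n) (Fin n) ℝ)) := by
    ext i j
    rcases i with i | i | i <;> rcases j with j | j | j <;>
      simp [hbb, hbP, LinearMap.toMatrix_apply, Module.Basis.prod_repr_inl, Module.Basis.prod_repr_inr,
        Module.Basis.prod_apply, hL, Pi.basisFun_repr, Module.Basis.singleton_repr, Module.Basis.singleton_apply,
        Pi.basisFun_apply, Matrix.one_apply, Pi.single_apply, eq_comm]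
  rw [hM, Matrix.det_fromBlocks_zero₂₁, Matrix.det_fromBlocks_zero₂₁, Matrix.det_smul]
  simp [Matrix.det_unique]

/-- The Jacobian determinant of the directional mapping has absolute value
`|1 + rρ|^(n−2)`. -/
theorem stmt8 (n : ℕ) (hn : 2 ≤ n) (ρ : ℝ)
    (θ v : Fin n → ℝ) (r : ℝ) (h : 1 + r * ρ ≠ 0) :
    |(fderiv ℝ (fun p : (Fin n → ℝ) × ℝ × (Fin n → ℝ) =>
        ((p.1 + p.2.1 • (p.2.2 + ρ • p.1), (-p.2.1 / (1 + p.2.1 * ρ), p.2.2)) :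
          (Fin n → ℝ) × ℝ × (Fin n → ℝ))) (θ, r, v)).det|
      = |1 + r * ρ| ^ (n - 2) := by
  classical
  set F : ((Fin n → ℝ) × ℝ × (Fin n → ℝ)) → ((Fin n → ℝ) × ℝ × (Fin n → ℝ)) :=
    fun p => (p.1 + p.2.1 • (p.2.2 + ρ • p.1), (-p.2.1 / (1 + p.2.1 * ρ), p.2.2)) with hFdef
  have h_fst : HasFDerivAt (fun p : (Fin n → ℝ) × ℝ × (Fin n → ℝ) => p.1)
      (ContinuousLinearMap.fst ℝ (Fin n → ℝ) (ℝ × (Fin n → ℝ))) (θ, r, v) := hasFDerivAt_fst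
  have h_snd : HasFDerivAt (fun p : (Fin n → ℝ) × ℝ × (Fin n → ℝ) => p.2)
      (ContinuousLinearMap.snd ℝ (Fin n → ℝ) (ℝ × (Fin n → ℝ))) (θ, r, v) := hasFDerivAt_snd
  have h_r := h_snd.fst
  have h_w := h_snd.snd
  have h_g := h_w.add (h_fst.const_smul ρ)
  have h_f1 := h_fst.add (h_r.smul h_g)
  have hφ : HasDerivAt (fun t : ℝ => -t / (1 + t * ρ))
      (((-1) * (1 + r * ρ) - (-r) * ρ) / (1 + r * ρ) ^ 2) r := by
    have hd : HasDerivAt (fun t : ℝ => 1 + t * ρ) ρ r := by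
      simpa using ((hasDerivAt_id r).mul_const ρ).const_add (1:ℝ)
    exact ((hasDerivAt_id r).neg).div hd h
  have h_f2 : HasFDerivAt (fun p : (Fin n → ℝ) × ℝ × (Fin n → ℝ) => -p.2.1 / (1 + p.2.1 * ρ))
      ((((-1) * (1 + r * ρ) - (-r) * ρ) / (1 + r * ρ) ^ 2) •
        ((ContinuousLinearMap.fst ℝ ℝ (Fin n → ℝ)).comp
          (ContinuousLinearMap.snd ℝ (Fin n → ℝ) (ℝ × (Fin n → ℝ))))) (θ, r, v) :=
    (hφ.comp_hasFDerivAt (θ, r, v) h_r :)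
  have hF : HasFDerivAt F _ (θ, r, v) := h_f1.prodMk (h_f2.prodMk h_w)
  have hL : ∀ p : (Fin n → ℝ) × ℝ × (Fin n → ℝ),
      fderiv ℝ F (θ, r, v) p =
      ((1 + r * ρ) • p.1 + p.2.1 • (v + ρ • θ) + r • p.2.2,
        (-(((1 + r * ρ) ^ 2)⁻¹)) * p.2.1, p.2.2) := by
    intro p
    rw [hF.fderiv]
    refine Prod.ext ?_ (Prod.ext ?_ ?_)
    · funext i
      simp [ContinuousLinearMap.smul_apply, smul_smul]
      try ring
    · simp only [ContinuousLinearMap.prod_apply, ContinuousLinearMap.smul_apply,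
        ContinuousLinearMap.comp_apply, ContinuousLinearMap.coe_fst', ContinuousLinearMap.coe_snd',
        smul_eq_mul]
      field_simp
      try ring
    · simp
  have hdet := aux_det8 n (1 + r * ρ) (-(((1 + r * ρ) ^ 2)⁻¹)) r (v + ρ • θ)
    (fderiv ℝ F (θ, r, v)).toLinearMap (fun p => hL p)
  rw [show (fderiv ℝ F (θ, r, v)).det
      = (1 + r * ρ) ^ n * (-(((1 + r * ρ) ^ 2)⁻¹)) from hdet]
  have h0 : |1 + r * ρ| ≠ 0 := abs_ne_zero.2 h
  have hpow : |1 + r * ρ| ^ n = |1 + r * ρ| ^ (n - 2) * |1 + r * ρ| ^ 2 := by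
    rw [← pow_add]; congr 1; omega
  rw [abs_mul, abs_neg, abs_inv, abs_pow, abs_pow, hpow]
  field_simp
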